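/- arXiv:2605.10206 — 4 statements merged into one kernel-verified Lean document; each statement's English description precedes it below -/
import Mathlib

section
/- Let (Ω, 𝓕, ℙ) be a standard Borel probability space, 𝒳 and 𝒴 standard Borel spaces, A a positive integer. Let X : Ω → 𝒳, T : Ω → Fin A, potential outcomes Y(a) : Ω → 𝒴 for each a ∈ Fin A, and a completed vector Ȳ : Ω → 𝒴^A, all measurable. Assume: (exact factual reconstruction) Ȳ(ω)(T(ω)) = Y(T(ω))(ω) ℙ-almost surely; (ignorability) for every a, Y(a) and T are conditionally independent given σ(X); (invariance) T and Ȳ are conditionally independent given σ(X). Then for every a ∈ Fin A, the regular conditional distribution of ω ↦ Ȳ(ω)(a) given X equals the regular conditional distribution of Y(a) given X, for (ℙ∘X⁻¹)-almost every x such that the conditional probability ℙ(T = a | X = x) is strictly positive. -/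
set_option maxHeartbeats 1000000


open MeasureTheory ProbabilityTheory

/-!
STATEMENT 2: Identified object of factual-index adversarial imputation.
On a standard Borel probability space, with covariates `X : Ω → 𝒳`, treatment
`T : Ω → Fin A`, potential outcomes `Y a : Ω → 𝒴`, and a completed vector
`Ȳ : Ω → Fin A → 𝒴`, assume exact factual reconstruction (`Ȳ ω (T ω) = Y (T ω) ω` a.s.),
ignorability (`Y a ⟂⟂ T | σ(X)` for every `a`), and invariance (`T ⟂⟂ Ȳ | σ(X)`).
Then for every `a`, the regular conditional distribution of `ω ↦ Ȳ ω a` given `X`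
equals that of `Y a` given `X`, for `(Pr ∘ X⁻¹)`-a.e. `x` with positive propensity
`Pr(T = a | X = x) = condDistrib T X Pr x {a} > 0`.
-/

theorem stmt2 {Ω 𝓧 𝓨 : Type*}
    [MeasurableSpace Ω] [StandardBorelSpace Ω] [Nonempty Ω]
    [MeasurableSpace 𝓧] [StandardBorelSpace 𝓧]
    [MeasurableSpace 𝓨] [StandardBorelSpace 𝓨] [Nonempty 𝓨]
    (Pr : Measure Ω) [IsProbabilityMeasure Pr]
    (A : ℕ) [NeZero A]
    (X : Ω → 𝓧) (T : Ω → Fin A) (Y : Fin A → Ω → 𝓨) (Ybar : Ω → Fin A → 𝓨)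
    (hX : Measurable X) (hT : Measurable T)
    (hY : ∀ a, Measurable (Y a)) (hYbar : Measurable Ybar)
    -- exact factual reconstruction
    (hrecon : ∀ᵐ ω ∂Pr, Ybar ω (T ω) = Y (T ω) ω)
    -- ignorability: Y(a) ⟂⟂ T given σ(X)
    (hignor : ∀ a : Fin A,
      CondIndepFun (MeasurableSpace.comap X inferInstance) hX.comap_le (Y a) T Pr)
    -- invariance: T ⟂⟂ Ȳ given σ(X)
    (hinv : CondIndepFun (MeasurableSpace.comap X inferInstance) hX.comap_le T Ybar Pr) :
    ∀ a : Fin A, ∀ᵐ x ∂(Pr.map X),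
      0 < condDistrib T X Pr x {a} →
        condDistrib (fun ω => Ybar ω a) X Pr x = condDistrib (Y a) X Pr x := by
  intro a
  classical
  -- a countable π-system generating the σ-algebra of 𝓨
  set S : ℕ → Set 𝓨 := MeasurableSpace.natGeneratingSequence 𝓨 with hS
  set P : Set (Set 𝓨) := Set.range (fun F : Finset ℕ => ⋂ i ∈ F, S i) with hP
  have hPc : P.Countable := Set.countable_range _
  have hPpi : IsPiSystem P := by
    rintro _ ⟨F, rfl⟩ _ ⟨G, rfl⟩ -
    refine ⟨F ∪ G, ?_⟩
    simp only [Finset.mem_union]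
    ext y
    simp [or_imp, forall_and]
  have hPmeas : ∀ s ∈ P, MeasurableSet s := by
    rintro _ ⟨F, rfl⟩
    exact MeasurableSet.biInter F.countable_toSet
      (fun i _ => MeasurableSpace.measurableSet_natGeneratingSequence i)
  have hPgen : (inferInstance : MeasurableSpace 𝓨) = MeasurableSpace.generateFrom P := by
    refine le_antisymm ?_ (MeasurableSpace.generateFrom_le hPmeas)
    rw [← MeasurableSpace.generateFrom_natGeneratingSequence 𝓨]
    refine MeasurableSpace.generateFrom_le ?_
    rintro _ ⟨i, rfl⟩
    exact MeasurableSpace.measurableSet_generateFrom ⟨{i}, by simp [hS]⟩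
  -- key per-set identity
  have key : ∀ s : Set 𝓨, MeasurableSet s → ∀ᵐ x ∂(Pr.map X),
      0 < condDistrib T X Pr x {a} →
        condDistrib (fun ω => Ybar ω a) X Pr x s = condDistrib (Y a) X Pr x s := by
    intro s hs
    set m := MeasurableSpace.comap X (inferInstance : MeasurableSpace 𝓧) with hm
    set u : Set (Fin A → 𝓨) := (fun v => v a) ⁻¹' s with hu
    have hum : MeasurableSet u := measurable_pi_apply a hs
    have h1 := (condIndepFun_iff_condExp_inter_preimage_eq_mul hT hYbar).mp hinv
      {a} u (measurableSet_singleton a) hum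
    have h2 := (condIndepFun_iff_condExp_inter_preimage_eq_mul (hY a) hT).mp (hignor a)
      s {a} hs (measurableSet_singleton a)
    -- reconstruction: the two events coincide a.e.
    have hset : (T ⁻¹' {a} ∩ Ybar ⁻¹' u).indicator (fun _ => (1 : ℝ))
        =ᵐ[Pr] ((Y a) ⁻¹' s ∩ T ⁻¹' {a}).indicator (fun _ => (1 : ℝ)) := by
      filter_upwards [hrecon] with ω hω
      by_cases hTa : T ω = a
      · rw [hTa] at hω
        simp [Set.indicator_apply, Set.mem_inter_iff, hTa, hu, Set.mem_preimage, hω,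
          and_comm]
      · simp [Set.indicator_apply, Set.mem_inter_iff, hTa]
    have h3 : (Pr⟦T ⁻¹' {a} ∩ Ybar ⁻¹' u | m⟧) =ᵐ[Pr] (Pr⟦(Y a) ⁻¹' s ∩ T ⁻¹' {a} | m⟧) :=
      condExp_congr_ae hset
    have hmul : (fun ω => (Pr⟦T ⁻¹' {a} | m⟧) ω * (Pr⟦Ybar ⁻¹' u | m⟧) ω)
        =ᵐ[Pr] fun ω => (Pr⟦(Y a) ⁻¹' s | m⟧) ω * (Pr⟦T ⁻¹' {a} | m⟧) ω :=
      h1.symm.trans (h3.trans h2)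
    have cYb : (fun ω => (condDistrib (fun ω => Ybar ω a) X Pr (X ω) s).toReal)
        =ᵐ[Pr] Pr⟦Ybar ⁻¹' u | m⟧ :=
      condDistrib_ae_eq_condExp hX ((measurable_pi_apply a).comp hYbar) hs
    have cY : (fun ω => (condDistrib (Y a) X Pr (X ω) s).toReal)
        =ᵐ[Pr] Pr⟦(Y a) ⁻¹' s | m⟧ :=
      condDistrib_ae_eq_condExp hX (hY a) hs
    have cT : (fun ω => (condDistrib T X Pr (X ω) {a}).toReal)
        =ᵐ[Pr] Pr⟦T ⁻¹' {a} | m⟧ :=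
      condDistrib_ae_eq_condExp hX hT (measurableSet_singleton a)
    have hPr : ∀ᵐ ω ∂Pr,
        (condDistrib T X Pr (X ω) {a}).toReal
            * (condDistrib (fun ω => Ybar ω a) X Pr (X ω) s).toReal
          = (condDistrib (Y a) X Pr (X ω) s).toReal
            * (condDistrib T X Pr (X ω) {a}).toReal := by
      filter_upwards [hmul, cYb, cY, cT] with ω h hYb' hY' hT'
      rw [hYb', hY', hT']
      exact h
    have hmeasset : MeasurableSet {x : 𝓧 |
        (condDistrib T X Pr x {a}).toReal
            * (condDistrib (fun ω => Ybar ω a) X Pr x s).toReal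
          = (condDistrib (Y a) X Pr x s).toReal
            * (condDistrib T X Pr x {a}).toReal} := by
      refine measurableSet_eq_fun ?_ ?_
      · exact (((condDistrib T X Pr).measurable_coe (measurableSet_singleton a)).ennreal_toReal).mul
          (((condDistrib (fun ω => Ybar ω a) X Pr).measurable_coe hs).ennreal_toReal)
      · exact (((condDistrib (Y a) X Pr).measurable_coe hs).ennreal_toReal).mul
          (((condDistrib T X Pr).measurable_coe (measurableSet_singleton a)).ennreal_toReal)
    have hmap := (ae_map_iff hX.aemeasurable hmeasset).mpr hPr
    filter_upwards [hmap] with x hx hpos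
    have hπ : 0 < (condDistrib T X Pr x {a}).toReal :=
      ENNReal.toReal_pos hpos.ne' (measure_ne_top _ _)
    have hcancel : (condDistrib (fun ω => Ybar ω a) X Pr x s).toReal
        = (condDistrib (Y a) X Pr x s).toReal := by
      have hx' : (condDistrib (fun ω => Ybar ω a) X Pr x s).toReal
            * (condDistrib T X Pr x {a}).toReal
          = (condDistrib (Y a) X Pr x s).toReal
            * (condDistrib T X Pr x {a}).toReal := by
        rw [mul_comm] at hx; exact hx
      exact mul_right_cancel₀ hπ.ne' hx'
    exact (ENNReal.toReal_eq_toReal_iff' (measure_ne_top _ _) (measure_ne_top _ _)).mp hcancel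
  have hall : ∀ᵐ x ∂(Pr.map X), ∀ s ∈ P, 0 < condDistrib T X Pr x {a} →
      condDistrib (fun ω => Ybar ω a) X Pr x s = condDistrib (Y a) X Pr x s :=
    (ae_ball_iff hPc).mpr (fun s hs => key s (hPmeas s hs))
  filter_upwards [hall] with x hx hpos
  refine ext_of_generate_finite P hPgen hPpi (fun s hs => hx s hs hpos) ?_
  simp [measure_univ]
end

section
/- Let a ∈ (0, 1/2] and q ≥ 0. There exists a constant C = C(a,q) < ∞ such that for every n ∈ ℕ and p ∈ [0,1], if N is a binomial random variable with parameters n and p, then E[ (log(max(N,2)))^q · (max(N,1))^{−a} ] ≤ C · (log(max(n,2)))^q · (max(n·p, 1))^{−a}. -/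
open MeasureTheory
open scoped ENNReal

/-!
STATEMENT 8: Binomial negative-moment bound. For `a ∈ (0, 1/2]` and `q ≥ 0` there is
a constant `C = C(a,q) < ∞` such that for every `n` and `p ∈ [0,1]`, if `N` is a
`Binomial(n,p)` random variable, then
`E[(log(max(N,2)))^q · (max(N,1))^{−a}] ≤ C · (log(max(n,2)))^q · (max(np,1))^{−a}`.
-/

private lemma pmfSum (n : ℕ) (p : ℝ) :
    ∑ k ∈ Finset.range (n + 1), (n.choose k : ℝ) * p ^ k * (1 - p) ^ (n - k) = 1 := by
  have h := add_pow p (1 - p) n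
  have hp1 : p + (1 - p) = 1 := by ring
  rw [hp1, one_pow] at h
  calc ∑ k ∈ Finset.range (n + 1), (n.choose k : ℝ) * p ^ k * (1 - p) ^ (n - k)
      = ∑ k ∈ Finset.range (n + 1), p ^ k * (1 - p) ^ (n - k) * (n.choose k : ℝ) := by
        exact Finset.sum_congr rfl fun k _ => by ring
    _ = 1 := h.symm

private lemma sumInv (n : ℕ) (p : ℝ) (hp1 : p ≤ 1) :
    ((n : ℝ) + 1) * p *
      ∑ k ∈ Finset.range (n + 1),
        ((n.choose k : ℝ) * p ^ k * (1 - p) ^ (n - k)) * (1 / ((k : ℝ) + 1)) ≤ 1 := by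
  set f : ℕ → ℝ := fun j => ((n + 1).choose j : ℝ) * p ^ j * (1 - p) ^ (n + 1 - j) with hf
  have hterm : ∀ k ∈ Finset.range (n + 1),
      ((n : ℝ) + 1) * p * (((n.choose k : ℝ) * p ^ k * (1 - p) ^ (n - k)) * (1 / ((k : ℝ) + 1)))
        = f (k + 1) := by
    intro k _
    have hc : ((n : ℝ) + 1) * (n.choose k : ℝ) = ((n + 1).choose (k + 1) : ℝ) * ((k : ℝ) + 1) := by
      have := Nat.add_one_mul_choose_eq n k
      exact_mod_cast congrArg (Nat.cast : ℕ → ℝ) this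
    have hk1 : ((k : ℝ) + 1) ≠ 0 := by positivity
    have hsub : n + 1 - (k + 1) = n - k := by omega
    simp only [hf, hsub]
    field_simp
    linear_combination (p ^ (k + 1) * (1 - p) ^ (n - k)) * hc
  rw [Finset.mul_sum, Finset.sum_congr rfl hterm]
  have htot : ∑ j ∈ Finset.range (n + 2), f j = 1 := pmfSum (n + 1) p
  have hsplit := Finset.sum_range_succ' f (n + 1)
  simp only [show n + 1 + 1 = n + 2 from rfl] at hsplit
  have hf0 : 0 ≤ f 0 := by
    have h1 : (0:ℝ) ≤ 1 - p := by linarith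
    simp only [hf]
    positivity
  linarith

theorem stmt8 (a q : ℝ) (ha : 0 < a) (ha' : a ≤ 1 / 2) (hq : 0 ≤ q) :
    ∃ C : ℝ, ∀ (n : ℕ) (p : ℝ), p ∈ Set.Icc (0 : ℝ) 1 →
      ∀ (Ω : Type) (_ : MeasurableSpace Ω) (μ : Measure Ω), IsProbabilityMeasure μ →
      ∀ N : Ω → ℕ, Measurable N →
      (∀ k : ℕ, μ {ω | N ω = k}
          = ENNReal.ofReal ((n.choose k : ℝ) * p ^ k * (1 - p) ^ (n - k))) →
      ∫ ω, (Real.log ((max (N ω) 2 : ℕ) : ℝ)) ^ q * ((max (N ω) 1 : ℕ) : ℝ) ^ (-a) ∂μ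
        ≤ C * (Real.log ((max n 2 : ℕ) : ℝ)) ^ q * (max ((n : ℝ) * p) 1) ^ (-a) := by
  refine ⟨(2 : ℝ) ^ a, ?_⟩
  intro n p hp Ω mΩ μ hμprob N hN hμ
  obtain ⟨hp0, hp1⟩ := hp
  have h1p : (0 : ℝ) ≤ 1 - p := by linarith
  set w : ℕ → ℝ := fun k => (n.choose k : ℝ) * p ^ k * (1 - p) ^ (n - k) with hw
  have hw0 : ∀ k, 0 ≤ w k := fun k => by positivity
  have hwsum : ∑ k ∈ Finset.range (n + 1), w k = 1 := pmfSum n p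
  set g : ℕ → ℝ :=
    fun k => (Real.log ((max k 2 : ℕ) : ℝ)) ^ q * ((max k 1 : ℕ) : ℝ) ^ (-a) with hg
  have hg0 : ∀ k, 0 ≤ g k := by
    intro k
    apply mul_nonneg
    · apply Real.rpow_nonneg
      apply Real.log_nonneg
      have h2 : (2 : ℕ) ≤ max k 2 := le_max_right _ _
      have : (2 : ℝ) ≤ ((max k 2 : ℕ) : ℝ) := by exact_mod_cast h2
      linarith
    · apply Real.rpow_nonneg; positivity
  set ν : Measure ℕ := μ.map N with hν
  have hνprob : IsProbabilityMeasure ν := Measure.isProbabilityMeasure_map hN.aemeasurable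
  have hνk : ∀ k, ν {k} = ENNReal.ofReal (w k) := by
    intro k
    rw [hν, Measure.map_apply hN (measurableSet_singleton k)]
    have hpre : N ⁻¹' {k} = {ω | N ω = k} := rfl
    rw [hpre, hμ k]
  have hνzero : ∀ k, n < k → ν {k} = 0 := by
    intro k hk
    rw [hνk k]
    simp [hw, Nat.choose_eq_zero_of_lt hk]
  set B : ℝ := ∑ j ∈ Finset.range (n + 1), g j with hB
  have hgB : ∀ k ≤ n, ‖g k‖ ≤ B := by
    intro k hk
    rw [Real.norm_of_nonneg (hg0 k)]
    exact Finset.single_le_sum (fun j _ => hg0 j) (Finset.mem_range.2 (Nat.lt_succ_of_le hk))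
  have hnullset : ν {k : ℕ | n < k} = 0 := by
    have hcov : {k : ℕ | n < k} = ⋃ k ∈ {k : ℕ | n < k}, {k} := by
      ext x; simp
    rw [hcov, measure_biUnion_null_iff (Set.to_countable _)]
    exact fun k hk => hνzero k hk
  have hgmeas : Measurable g := measurable_from_nat
  have hInt : Integrable g ν := by
    refine Integrable.mono' (integrable_const B) hgmeas.aestronglyMeasurable ?_
    rw [ae_iff]
    refine measure_mono_null (fun k hk => ?_) hnullset
    simp only [Set.mem_setOf_eq, not_le] at hk ⊢
    by_contra hc
    push_neg at hc
    exact absurd (hgB k hc) (not_le.2 hk)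
  have hint_eq : (∫ ω, g (N ω) ∂μ) = ∑ k ∈ Finset.range (n + 1), w k * g k := by
    rw [← integral_map hN.aemeasurable hgmeas.aestronglyMeasurable, ← hν,
      integral_countable' hInt, tsum_eq_sum (s := Finset.range (n + 1)) ?_]
    · refine Finset.sum_congr rfl fun k _ => ?_
      rw [measureReal_def, hνk k, ENNReal.toReal_ofReal (hw0 k), smul_eq_mul]
    · intro k hk
      rw [measureReal_def, hνzero k (by simp only [Finset.mem_range, not_lt] at hk; omega)]
      simp
  set L : ℝ := Real.log ((max n 2 : ℕ) : ℝ) with hL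
  have hL0 : 0 ≤ L := by
    apply Real.log_nonneg
    have h2 : (2 : ℕ) ≤ max n 2 := le_max_right _ _
    have : (2 : ℝ) ≤ ((max n 2 : ℕ) : ℝ) := by exact_mod_cast h2
    linarith
  have hh0 : ∀ k, (0 : ℝ) ≤ ((max k 1 : ℕ) : ℝ) ^ (-a) := fun k => Real.rpow_nonneg (by positivity) _
  have hgk : ∀ k ≤ n, g k ≤ L ^ q * ((max k 1 : ℕ) : ℝ) ^ (-a) := by
    intro k hk
    apply mul_le_mul_of_nonneg_right _ (hh0 k)
    apply Real.rpow_le_rpow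
    · apply Real.log_nonneg
      have h2 : (2 : ℕ) ≤ max k 2 := le_max_right _ _
      have : (2 : ℝ) ≤ ((max k 2 : ℕ) : ℝ) := by exact_mod_cast h2
      linarith
    · apply Real.log_le_log
      · have h2 : (2 : ℕ) ≤ max k 2 := le_max_right _ _
        have : (2 : ℝ) ≤ ((max k 2 : ℕ) : ℝ) := by exact_mod_cast h2
        linarith
      · have : max k 2 ≤ max n 2 := max_le_max hk le_rfl
        exact_mod_cast this
    · exact hq
  have h1 : ∑ k ∈ Finset.range (n + 1), w k * g k
      ≤ L ^ q * ∑ k ∈ Finset.range (n + 1), w k * ((max k 1 : ℕ) : ℝ) ^ (-a) := by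
    rw [Finset.mul_sum]
    refine Finset.sum_le_sum fun k hk => ?_
    have hk' : k ≤ n := by
      have := Finset.mem_range.1 hk; omega
    calc w k * g k ≤ w k * (L ^ q * ((max k 1 : ℕ) : ℝ) ^ (-a)) :=
          mul_le_mul_of_nonneg_left (hgk k hk') (hw0 k)
      _ = L ^ q * (w k * ((max k 1 : ℕ) : ℝ) ^ (-a)) := by ring
  have h2 : ∑ k ∈ Finset.range (n + 1), w k * ((max k 1 : ℕ) : ℝ) ^ (-a)
      ≤ (2 : ℝ) ^ a * (max ((n : ℝ) * p) 1) ^ (-a) := by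
    rcases le_or_gt ((n : ℝ) * p) 1 with hnp | hnp
    · have hle1 : ∑ k ∈ Finset.range (n + 1), w k * ((max k 1 : ℕ) : ℝ) ^ (-a) ≤ 1 := by
        rw [← hwsum]
        refine Finset.sum_le_sum fun k _ => ?_
        have hm1 : (1 : ℝ) ≤ ((max k 1 : ℕ) : ℝ) := by
          exact_mod_cast le_max_right k 1
        have := Real.rpow_le_one_of_one_le_of_nonpos hm1 (neg_nonpos.2 ha.le)
        calc w k * ((max k 1 : ℕ) : ℝ) ^ (-a) ≤ w k * 1 :=
              mul_le_mul_of_nonneg_left this (hw0 k)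
          _ = w k := mul_one _
      have h2a : (1 : ℝ) ≤ (2 : ℝ) ^ a := Real.one_le_rpow one_le_two ha.le
      rw [max_eq_right hnp, Real.one_rpow, mul_one]
      linarith
    · have hnppos : (0 : ℝ) < (n : ℝ) * p := lt_trans one_pos hnp
      have hppos : 0 < p := by
        rcases hp0.lt_or_eq with h | h
        · exact h
        · exfalso; rw [← h] at hnppos; simp at hnppos
      have hstep1 : ∀ k, ((max k 1 : ℕ) : ℝ) ^ (-a) ≤ (2 / ((k : ℝ) + 1)) ^ a := by
        intro k
        have hm1 : (1 : ℝ) ≤ ((max k 1 : ℕ) : ℝ) := by exact_mod_cast le_max_right k 1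
        have hmpos : (0 : ℝ) < ((max k 1 : ℕ) : ℝ) := by linarith
        rw [Real.rpow_neg hmpos.le, ← Real.inv_rpow hmpos.le]
        apply Real.rpow_le_rpow (by positivity) _ ha.le
        have hk2 : (k : ℝ) + 1 ≤ 2 * ((max k 1 : ℕ) : ℝ) := by
          have : k + 1 ≤ 2 * max k 1 := by omega
          exact_mod_cast this
        rw [inv_eq_one_div, div_le_div_iff₀ hmpos (by positivity)]
        linarith
      have hjensen : ∑ k ∈ Finset.range (n + 1), w k * (2 / ((k : ℝ) + 1)) ^ a
          ≤ (∑ k ∈ Finset.range (n + 1), w k * (2 / ((k : ℝ) + 1))) ^ a := by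
        have hcon := (Real.concaveOn_rpow ha.le (by linarith : a ≤ 1)).le_map_sum
          (fun i _ => hw0 i) hwsum
          (fun i _ => Set.mem_Ici.2 (by positivity : (0:ℝ) ≤ 2 / ((i : ℝ) + 1)))
        simpa [smul_eq_mul] using hcon
      have hmean : ∑ k ∈ Finset.range (n + 1), w k * (2 / ((k : ℝ) + 1))
          ≤ 2 / (((n : ℝ) + 1) * p) := by
        have hs := sumInv n p hp1
        have hd : (0 : ℝ) < ((n : ℝ) + 1) * p := by positivity
        have hrw : ∑ k ∈ Finset.range (n + 1), w k * (2 / ((k : ℝ) + 1))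
            = 2 * ∑ k ∈ Finset.range (n + 1), w k * (1 / ((k : ℝ) + 1)) := by
          rw [Finset.mul_sum]
          exact Finset.sum_congr rfl fun k _ => by ring
        rw [hrw, le_div_iff₀ hd]
        nlinarith [hs]
      have hsum0 : (0 : ℝ) ≤ ∑ k ∈ Finset.range (n + 1), w k * (2 / ((k : ℝ) + 1)) :=
        Finset.sum_nonneg fun k _ => mul_nonneg (hw0 k) (by positivity)
      calc ∑ k ∈ Finset.range (n + 1), w k * ((max k 1 : ℕ) : ℝ) ^ (-a)
          ≤ ∑ k ∈ Finset.range (n + 1), w k * (2 / ((k : ℝ) + 1)) ^ a :=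
            Finset.sum_le_sum fun k _ => mul_le_mul_of_nonneg_left (hstep1 k) (hw0 k)
        _ ≤ (∑ k ∈ Finset.range (n + 1), w k * (2 / ((k : ℝ) + 1))) ^ a := hjensen
        _ ≤ (2 / (((n : ℝ) + 1) * p)) ^ a := Real.rpow_le_rpow hsum0 hmean ha.le
        _ ≤ (2 / ((n : ℝ) * p)) ^ a := by
            apply Real.rpow_le_rpow (by positivity) _ ha.le
            apply div_le_div_of_nonneg_left (by norm_num) hnppos
            nlinarith
        _ = (2 : ℝ) ^ a * ((n : ℝ) * p) ^ (-a) := by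
            rw [Real.div_rpow (by norm_num) hnppos.le, Real.rpow_neg hnppos.le, div_eq_mul_inv]
        _ = (2 : ℝ) ^ a * (max ((n : ℝ) * p) 1) ^ (-a) := by rw [max_eq_left hnp.le]
  have hfinal : ∫ ω, g (N ω) ∂μ
      ≤ (2 : ℝ) ^ a * L ^ q * (max ((n : ℝ) * p) 1) ^ (-a) := by
    rw [hint_eq]
    calc ∑ k ∈ Finset.range (n + 1), w k * g k
        ≤ L ^ q * ∑ k ∈ Finset.range (n + 1), w k * ((max k 1 : ℕ) : ℝ) ^ (-a) := h1
      _ ≤ L ^ q * ((2 : ℝ) ^ a * (max ((n : ℝ) * p) 1) ^ (-a)) :=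
          mul_le_mul_of_nonneg_left h2 (Real.rpow_nonneg hL0 q)
      _ = (2 : ℝ) ^ a * L ^ q * (max ((n : ℝ) * p) 1) ^ (-a) := by ring
  exact hfinal
end

section
/- Let M be a positive integer, 𝒴 ⊆ ℝ^p compact, q₁,…,q_M ≥ 0 with Σ_j q_j = 1, and let μ_j, ν_j (j = 1,…,M) be Borel probability measures on 𝒴. Define P = Σ_{j=1}^M q_j · (δ_j ⊗ μ_j) and R = Σ_{j=1}^M q_j · (δ_j ⊗ ν_j) as probability measures on {1,…,M} × 𝒴 (so both have 𝒲-marginal Q = Σ_j q_j δ_j). Then eW₁(P,R) = Σ_{j=1}^M q_j · W₁(μ_j, ν_j). -/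
open MeasureTheory ProbabilityTheory
open scoped ENNReal NNReal

/-!
STATEMENT 9: Finite-state extended-Wasserstein identity:
for `P = Σ_j q_j (δ_j ⊗ μ_j)` and `R = Σ_j q_j (δ_j ⊗ ν_j)` on `{1,…,M} × 𝒴`
with `Σ_j q_j = 1`, `eW₁(P,R) = Σ_j q_j W₁(μ_j, ν_j)`.
-/

noncomputable def W1 {Y : Type*} [MeasurableSpace Y] [PseudoMetricSpace Y]
    (η ζ : Measure Y) : ℝ :=
  sInf ((fun γ : Measure (Y × Y) => ∫ q, dist q.1 q.2 ∂γ) ''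
    {γ | γ.map Prod.fst = η ∧ γ.map Prod.snd = ζ})

noncomputable def eW1 {W Y : Type*} [MeasurableSpace W] [MeasurableSpace Y]
    [PseudoMetricSpace Y] (P R : Measure (W × Y)) : ℝ :=
  sInf ((fun α : Measure ((W × Y) × (W × Y)) => ∫ q, dist q.1.2 q.2.2 ∂α) ''
    {α | α.map Prod.fst = P ∧ α.map Prod.snd = R ∧
      α.map (fun q => (q.1.1, q.2.1)) = (P.map Prod.fst).map (fun w => (w, w))})

private lemma mapFinsetSum {α β ι : Type*} [MeasurableSpace α] [MeasurableSpace β]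
    (s : Finset ι) (m : ι → Measure α) {f : α → β} (hf : Measurable f) :
    (∑ j ∈ s, m j).map f = ∑ j ∈ s, (m j).map f := by
  classical
  induction s using Finset.induction_on with
  | empty => simp
  | @insert a s ha ih => rw [Finset.sum_insert ha, Finset.sum_insert ha, Measure.map_add _ _ hf, ih]

private lemma restrictFinsetSum {α ι : Type*} [MeasurableSpace α]
    (s : Finset ι) (m : ι → Measure α) (t : Set α) :
    (∑ j ∈ s, m j).restrict t = ∑ j ∈ s, (m j).restrict t := by
  classical
  induction s using Finset.induction_on with
  | empty => simp
  | @insert a s ha ih => rw [Finset.sum_insert ha, Finset.sum_insert ha, Measure.restrict_add, ih]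

private lemma integrable_of_bdd {X : Type*} [MeasurableSpace X] {m : Measure X} [IsFiniteMeasure m]
    {f : X → ℝ} (hf : Measurable f) (h0 : ∀ x, 0 ≤ f x) {C : ℝ} (hC : ∀ x, f x ≤ C) :
    Integrable f m :=
  (integrable_const C).mono' hf.aestronglyMeasurable
    (Filter.Eventually.of_forall fun x => by rw [Real.norm_of_nonneg (h0 x)]; exact hC x)

theorem stmt9 (M : ℕ) (hM : 0 < M)
    {p : ℕ} (K : Set (EuclideanSpace ℝ (Fin p))) (hK : IsCompact K)
    (q : Fin M → ℝ≥0) (hq : ∑ j, q j = 1)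
    (μ ν : Fin M → Measure ↥K)
    [∀ j, IsProbabilityMeasure (μ j)] [∀ j, IsProbabilityMeasure (ν j)] :
    eW1 (∑ j, (q j : ℝ≥0∞) • ((Measure.dirac j).prod (μ j)))
        (∑ j, (q j : ℝ≥0∞) • ((Measure.dirac j).prod (ν j)))
      = ∑ j, (q j : ℝ) * W1 (μ j) (ν j) := by
  classical
  haveI : CompactSpace ↥K := isCompact_iff_compactSpace.mp hK
  obtain ⟨D, hD⟩ := Metric.isBounded_iff.mp (isCompact_univ (X := ↥K)).isBounded
  have hmf2 : Measurable (fun x : ((Fin M × ↥K) × (Fin M × ↥K)) => dist x.1.2 x.2.2) :=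
    measurable_fst.snd.dist measurable_snd.snd
  have hmf1 : Measurable (fun yz : ↥K × ↥K => dist yz.1 yz.2) :=
    measurable_fst.dist measurable_snd
  have hdiagmeas : Measurable (fun w : Fin M => (w, w)) := measurable_id.prodMk measurable_id
  set P : Measure (Fin M × ↥K) := ∑ j, (q j : ℝ≥0∞) • ((Measure.dirac j).prod (μ j)) with hPdef
  set R : Measure (Fin M × ↥K) := ∑ j, (q j : ℝ≥0∞) • ((Measure.dirac j).prod (ν j)) with hRdef
  have hq' : ∑ j, (q j : ℝ) = 1 := by rw [← NNReal.coe_sum, hq, NNReal.coe_one]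
  have hPuniv : P Set.univ = 1 := by
    rw [hPdef]
    simp only [Measure.finset_sum_apply, Measure.smul_apply, smul_eq_mul, measure_univ, mul_one]
    rw [← ENNReal.coe_finset_sum, hq, ENNReal.coe_one]
  have hPfst : P.map Prod.fst = ∑ j, (q j : ℝ≥0∞) • Measure.dirac j := by
    rw [hPdef, mapFinsetSum _ _ measurable_fst]
    refine Finset.sum_congr rfl fun j _ => ?_
    rw [Measure.map_smul, Measure.map_fst_prod, measure_univ, one_smul]
  have hQdiag : (P.map Prod.fst).map (fun w => (w, w))
      = ∑ j, (q j : ℝ≥0∞) • Measure.dirac ((j : Fin M), (j : Fin M)) := by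
    rw [hPfst, mapFinsetSum _ _ hdiagmeas]
    refine Finset.sum_congr rfl fun j _ => ?_
    rw [Measure.map_smul, Measure.map_dirac' hdiagmeas]
  -- KEY: any family of couplings yields a diagonal coupling
  have key1 : ∀ γ : Fin M → Measure (↥K × ↥K),
      (∀ j, (γ j).map Prod.fst = μ j) → (∀ j, (γ j).map Prod.snd = ν j) →
      (∑ j, (q j : ℝ) * ∫ yz, dist yz.1 yz.2 ∂(γ j)) ∈
        ((fun α : Measure ((Fin M × ↥K) × (Fin M × ↥K)) => ∫ x, dist x.1.2 x.2.2 ∂α) ''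
          {α | α.map Prod.fst = P ∧ α.map Prod.snd = R ∧
            α.map (fun x => (x.1.1, x.2.1)) = (P.map Prod.fst).map fun w => (w, w)}) := by
    intro γ hγ1 hγ2
    have hprob : ∀ j, IsProbabilityMeasure (γ j) := by
      intro j
      constructor
      have := congrArg (fun m : Measure ↥K => m Set.univ) (hγ1 j)
      simpa [Measure.map_apply measurable_fst MeasurableSet.univ] using this
    have he : ∀ j : Fin M, Measurable (fun yz : ↥K × ↥K => ((j, yz.1), (j, yz.2))) :=
      fun j => (measurable_const.prodMk measurable_fst).prodMk
        (measurable_const.prodMk measurable_snd)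
    refine ⟨∑ j, (q j : ℝ≥0∞) • (γ j).map (fun yz => ((j, yz.1), (j, yz.2))), ⟨?_, ?_, ?_⟩, ?_⟩
    · rw [mapFinsetSum _ _ measurable_fst, hPdef]
      refine Finset.sum_congr rfl fun j _ => ?_
      rw [Measure.map_smul, Measure.map_map measurable_fst (he j)]
      have h1 : (Prod.fst ∘ fun yz : ↥K × ↥K => ((j, yz.1), (j, yz.2)))
          = (Prod.mk j) ∘ Prod.fst := rfl
      rw [h1, ← Measure.map_map measurable_prodMk_left measurable_fst, hγ1 j,
        Measure.dirac_prod]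
    · rw [mapFinsetSum _ _ measurable_snd, hRdef]
      refine Finset.sum_congr rfl fun j _ => ?_
      rw [Measure.map_smul, Measure.map_map measurable_snd (he j)]
      have h1 : (Prod.snd ∘ fun yz : ↥K × ↥K => ((j, yz.1), (j, yz.2)))
          = (Prod.mk j) ∘ Prod.snd := rfl
      rw [h1, ← Measure.map_map measurable_prodMk_left measurable_snd, hγ2 j,
        Measure.dirac_prod]
    · rw [hQdiag, mapFinsetSum _ _ (measurable_fst.fst.prodMk measurable_snd.fst)]
      refine Finset.sum_congr rfl fun j _ => ?_
      rw [Measure.map_smul,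
        Measure.map_map (measurable_fst.fst.prodMk measurable_snd.fst) (he j)]
      have h1 : ((fun x : (Fin M × ↥K) × (Fin M × ↥K) => (x.1.1, x.2.1)) ∘
          fun yz : ↥K × ↥K => ((j, yz.1), (j, yz.2))) = fun _ => (j, j) := rfl
      rw [h1, Measure.map_const, measure_univ, one_smul]
    · have hfin : ∀ j : Fin M,
          IsFiniteMeasure ((q j : ℝ≥0∞) • (γ j).map (fun yz : ↥K × ↥K => ((j, yz.1), (j, yz.2)))) := by
        intro j
        constructor
        rw [Measure.smul_apply, Measure.map_apply (he j) MeasurableSet.univ]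
        simp only [Set.preimage_univ, measure_univ, smul_eq_mul, mul_one]
        exact ENNReal.coe_lt_top
      dsimp only
      rw [integral_finset_sum_measure (fun j _ => by
        haveI := hfin j
        exact integrable_of_bdd hmf2 (fun _ => dist_nonneg)
          (fun x => hD (Set.mem_univ _) (Set.mem_univ _)))]
      refine Finset.sum_congr rfl fun j _ => ?_
      rw [integral_smul_measure, integral_map (he j).aemeasurable hmf2.aestronglyMeasurable]
      simp [ENNReal.coe_toReal]
  have S1bdd : BddBelow ((fun α : Measure ((Fin M × ↥K) × (Fin M × ↥K)) => ∫ x, dist x.1.2 x.2.2 ∂α) ''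
      {α | α.map Prod.fst = P ∧ α.map Prod.snd = R ∧
        α.map (fun x => (x.1.1, x.2.1)) = (P.map Prod.fst).map fun w => (w, w)}) := by
    refine ⟨0, ?_⟩
    rintro x ⟨α, -, rfl⟩
    exact integral_nonneg fun _ => dist_nonneg
  have hprodc : ∀ j, ((μ j).prod (ν j)).map Prod.fst = μ j ∧ ((μ j).prod (ν j)).map Prod.snd = ν j := by
    intro j
    constructor
    · rw [Measure.map_fst_prod, measure_univ, one_smul]
    · rw [Measure.map_snd_prod, measure_univ, one_smul]
  have hle : eW1 P R ≤ ∑ j, (q j : ℝ) * W1 (μ j) (ν j) := by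
    refine le_of_forall_pos_le_add fun ε hε => ?_
    have hch : ∀ j : Fin M, ∃ γ : Measure (↥K × ↥K), γ.map Prod.fst = μ j ∧ γ.map Prod.snd = ν j ∧
        ∫ yz, dist yz.1 yz.2 ∂γ < W1 (μ j) (ν j) + ε := by
      intro j
      have hne : ((fun γ : Measure (↥K × ↥K) => ∫ yz, dist yz.1 yz.2 ∂γ) ''
          {γ | γ.map Prod.fst = μ j ∧ γ.map Prod.snd = ν j}).Nonempty :=
        ⟨_, ⟨(μ j).prod (ν j), ⟨(hprodc j).1, (hprodc j).2⟩, rfl⟩⟩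
      have hlt : W1 (μ j) (ν j) < W1 (μ j) (ν j) + ε := lt_add_of_pos_right _ hε
      rw [W1] at hlt
      obtain ⟨c, hc, hclt⟩ := exists_lt_of_csInf_lt hne hlt
      obtain ⟨γ, hγ, rfl⟩ := hc
      exact ⟨γ, hγ.1, hγ.2, hclt⟩
    choose γ hγ1 hγ2 hγ3 using hch
    have hmem := key1 γ hγ1 hγ2
    have h1 : eW1 P R ≤ ∑ j, (q j : ℝ) * ∫ yz, dist yz.1 yz.2 ∂(γ j) := by
      rw [eW1]
      exact csInf_le S1bdd hmem
    refine h1.trans ?_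
    have h2 : ∑ j, (q j : ℝ) * ∫ yz, dist yz.1 yz.2 ∂(γ j)
        ≤ ∑ j, (q j : ℝ) * (W1 (μ j) (ν j) + ε) :=
      Finset.sum_le_sum fun j _ => mul_le_mul_of_nonneg_left (hγ3 j).le (q j).coe_nonneg
    refine h2.trans_eq ?_
    simp only [mul_add, Finset.sum_add_distrib, ← Finset.sum_mul, hq', one_mul]
  have hge : ∑ j, (q j : ℝ) * W1 (μ j) (ν j) ≤ eW1 P R := by
    rw [eW1]
    refine le_csInf ⟨_, key1 (fun j => (μ j).prod (ν j)) (fun j => (hprodc j).1)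
      (fun j => (hprodc j).2)⟩ ?_
    rintro b ⟨α, ⟨h1, h2, h3⟩, rfl⟩
    haveI hαp : IsProbabilityMeasure α := by
      constructor
      have := congrArg (fun m : Measure (Fin M × ↥K) => m Set.univ) h1
      simp only [Measure.map_apply measurable_fst MeasurableSet.univ, Set.preimage_univ] at this
      rw [this, hPuniv]
    have hgmeas : Measurable (fun x : (Fin M × ↥K) × (Fin M × ↥K) => (x.1.1, x.2.1)) :=
      measurable_fst.fst.prodMk measurable_snd.fst
    -- α is concentrated on the diagonal in the W-coordinates
    have hae : ∀ᵐ x ∂α, x.1.1 = x.2.1 := by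
      have hN : MeasurableSet {w : Fin M × Fin M | w.1 ≠ w.2} := (Set.to_countable _).measurableSet
      have hz := congrArg (fun m : Measure (Fin M × Fin M) => m {w | w.1 ≠ w.2}) h3
      simp only [Measure.map_apply hgmeas hN, Measure.map_apply hdiagmeas hN] at hz
      have hemp : (fun w : Fin M => (w, w)) ⁻¹' {w : Fin M × Fin M | w.1 ≠ w.2} = ∅ := by
        ext w; simp
      rw [hemp, measure_empty] at hz
      rw [ae_iff]
      exact hz
    set A : Fin M → Set ((Fin M × ↥K) × (Fin M × ↥K)) := fun j => {x | x.1.1 = j} with hAdef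
    have hAmeas : ∀ j, MeasurableSet (A j) :=
      fun j => measurable_fst.fst (measurableSet_singleton j)
    have hdisj : Pairwise (Function.onFun Disjoint A) := by
      intro i j hij
      refine Set.disjoint_left.mpr ?_
      rintro x (hx : x.1.1 = i) (hx' : x.1.1 = j)
      exact hij (hx.symm.trans hx')
    have hU : (⋃ j, A j) = Set.univ := by
      ext x; simp only [Set.mem_iUnion, Set.mem_univ, iff_true]
      exact ⟨x.1.1, rfl⟩
    have hIntα : Integrable (fun x : (Fin M × ↥K) × (Fin M × ↥K) => dist x.1.2 x.2.2) α :=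
      integrable_of_bdd hmf2 (fun _ => dist_nonneg) (fun x => hD (Set.mem_univ _) (Set.mem_univ _))
    have hparts : ∫ x, dist x.1.2 x.2.2 ∂α = ∑ j, ∫ x in A j, dist x.1.2 x.2.2 ∂α := by
      rw [← setIntegral_univ, ← hU,
        integral_iUnion_fintype hAmeas hdisj (fun j => hIntα.integrableOn)]
    dsimp only
    rw [hparts]
    refine Finset.sum_le_sum fun j _ => ?_
    -- marginals of the restricted measure
    have hSmeas : MeasurableSet {w : Fin M × ↥K | w.1 = j} :=
      measurable_fst (measurableSet_singleton j)
    have hmargP : ∀ (m : Fin M → Measure ↥K), (∀ i, IsProbabilityMeasure (m i)) →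
        (∑ i, (q i : ℝ≥0∞) • ((Measure.dirac i).prod (m i))).restrict {w : Fin M × ↥K | w.1 = j}
          = (q j : ℝ≥0∞) • ((Measure.dirac j).prod (m j)) := by
      intro m hm
      rw [restrictFinsetSum]
      rw [Finset.sum_eq_single j ?h1 (by simp)]
      · rw [Measure.restrict_smul]
        congr 1
        apply Measure.restrict_eq_self_of_ae_mem
        rw [ae_iff]
        have hcompl : {x : Fin M × ↥K | ¬ x ∈ {w : Fin M × ↥K | w.1 = j}}
            = Prod.fst ⁻¹' ({j}ᶜ : Set (Fin M)) := rfl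
        rw [hcompl, ← Measure.map_apply measurable_fst (measurableSet_singleton j).compl,
          Measure.map_fst_prod]
        haveI := hm j
        simp [Measure.dirac_apply]
      · intro i _ hij
        rw [Measure.restrict_smul]
        have hz : ((Measure.dirac i).prod (m i)) {w : Fin M × ↥K | w.1 = j} = 0 := by
          have : {w : Fin M × ↥K | w.1 = j} = Prod.fst ⁻¹' ({j} : Set (Fin M)) := rfl
          rw [this, ← Measure.map_apply measurable_fst (measurableSet_singleton j),
            Measure.map_fst_prod]
          haveI := hm i
          simp [Measure.dirac_apply, hij]
        rw [Measure.restrict_eq_zero.mpr hz, smul_zero]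
    have hfstr : (α.restrict (A j)).map Prod.fst = (q j : ℝ≥0∞) • ((Measure.dirac j).prod (μ j)) := by
      have hAj : A j = Prod.fst ⁻¹' {w : Fin M × ↥K | w.1 = j} := rfl
      rw [hAj, ← Measure.restrict_map measurable_fst hSmeas, h1, hPdef]
      exact hmargP μ inferInstance
    have hAB : α.restrict (A j) = α.restrict {x : (Fin M × ↥K) × (Fin M × ↥K) | x.2.1 = j} := by
      apply Measure.restrict_congr_set
      rw [Filter.eventuallyEq_set]
      filter_upwards [hae] with x hx
      simp only [hAdef, Set.mem_setOf_eq, hx]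
    have hsndr : (α.restrict (A j)).map Prod.snd = (q j : ℝ≥0∞) • ((Measure.dirac j).prod (ν j)) := by
      rw [hAB]
      have hBj : {x : (Fin M × ↥K) × (Fin M × ↥K) | x.2.1 = j}
          = Prod.snd ⁻¹' {w : Fin M × ↥K | w.1 = j} := rfl
      rw [hBj, ← Measure.restrict_map measurable_snd hSmeas, h2, hRdef]
      exact hmargP ν inferInstance
    -- the conditional coupling
    rcases eq_or_ne (q j) 0 with hq0 | hq0
    · rw [hq0]
      simp only [NNReal.coe_zero, zero_mul]
      exact integral_nonneg fun _ => dist_nonneg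
    · have hc0 : (q j : ℝ≥0∞) ≠ 0 := by exact_mod_cast hq0
      have hct : (q j : ℝ≥0∞) ≠ ⊤ := ENNReal.coe_ne_top
      have hmh : Measurable (fun x : (Fin M × ↥K) × (Fin M × ↥K) => (x.1.2, x.2.2)) :=
        measurable_fst.snd.prodMk measurable_snd.snd
      set γj : Measure (↥K × ↥K) :=
        (q j : ℝ≥0∞)⁻¹ • (α.restrict (A j)).map (fun x => (x.1.2, x.2.2)) with hγjdef
      have hγfst : γj.map Prod.fst = μ j := by
        rw [hγjdef, Measure.map_smul, Measure.map_map measurable_fst hmh]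
        have hcomp : (Prod.fst ∘ fun x : (Fin M × ↥K) × (Fin M × ↥K) => (x.1.2, x.2.2))
            = Prod.snd ∘ Prod.fst := rfl
        rw [hcomp, ← Measure.map_map measurable_snd measurable_fst, hfstr,
          Measure.map_smul, Measure.map_snd_prod, measure_univ, one_smul, smul_smul,
          ENNReal.inv_mul_cancel hc0 hct, one_smul]
      have hγsnd : γj.map Prod.snd = ν j := by
        rw [hγjdef, Measure.map_smul, Measure.map_map measurable_snd hmh]
        have hcomp : (Prod.snd ∘ fun x : (Fin M × ↥K) × (Fin M × ↥K) => (x.1.2, x.2.2))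
            = Prod.snd ∘ Prod.snd := rfl
        rw [hcomp, ← Measure.map_map measurable_snd measurable_snd, hsndr,
          Measure.map_smul, Measure.map_snd_prod, measure_univ, one_smul, smul_smul,
          ENNReal.inv_mul_cancel hc0 hct, one_smul]
      have hW1le : W1 (μ j) (ν j) ≤ ∫ yz, dist yz.1 yz.2 ∂γj := by
        rw [W1]
        refine csInf_le ⟨0, ?_⟩ ⟨γj, ⟨hγfst, hγsnd⟩, rfl⟩
        rintro x ⟨γ', -, rfl⟩
        exact integral_nonneg fun _ => dist_nonneg
      have hIntEq : ∫ yz, dist yz.1 yz.2 ∂γj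
          = (q j : ℝ)⁻¹ * ∫ x in A j, dist x.1.2 x.2.2 ∂α := by
        rw [hγjdef, integral_smul_measure,
          integral_map hmh.aemeasurable hmf1.aestronglyMeasurable]
        simp [ENNReal.toReal_inv, ENNReal.coe_toReal]
      have hqR : (0 : ℝ) < q j := NNReal.coe_pos.mpr (pos_iff_ne_zero.mpr hq0)
      calc (q j : ℝ) * W1 (μ j) (ν j)
          ≤ (q j : ℝ) * ((q j : ℝ)⁻¹ * ∫ x in A j, dist x.1.2 x.2.2 ∂α) :=
            mul_le_mul_of_nonneg_left (hW1le.trans_eq hIntEq) hqR.le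
        _ = ∫ x in A j, dist x.1.2 x.2.2 ∂α := by field_simp
  exact le_antisymm hle hge
end

section
/- Let d be a positive integer and m ∈ ℕ^d. Let 𝓑_δ denote the set of points w ∈ [0,1]^d within Euclidean distance δ of the union of the boundaries of the cells of the anisotropic dyadic partition Π_m. (i) If Q_ρ is a probability measure on [0,1]^d with Lebesgue density bounded above by q̄ < ∞, then for all 0 < δ ≤ 1, Q_ρ(𝓑_δ) ≤ C · q̄ · δ · Σ_{j=1}^d 2^{m_j}, where C depends only on d. (ii) Let the cells of Π_m be enumerated C_1,…,C_K, let r_k(w) = 1{w ∈ C_k}, and let γ_k : [0,1]^d → [0,1] satisfy Σ_{k=1}^K γ_k(w) = 1 for all w. If Σ_k |γ_k(w) − r_k(w)| ≤ A·exp(−c₀δ/τ) for all w ∉ 𝓑_δ (with constants A, c₀, τ > 0), then η_ρ := ∫ Σ_{k=1}^K |γ_k(w) − r_k(w)| dQ_ρ(w) ≤ 2·Q_ρ(𝓑_δ) + A·exp(−c₀δ/τ). -/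
open MeasureTheory
open scoped ENNReal

/-!
STATEMENT 12: Dyadic boundary-layer control. Let `𝓑_δ` be the set of points of
`[0,1]^d` within Euclidean distance `δ` of the union of the boundaries of the cells
of the anisotropic dyadic partition `Π_m`.
(i) If `Q_ρ` has Lebesgue density bounded by `q̄`, then
    `Q_ρ(𝓑_δ) ≤ C(d) · q̄ · δ · Σ_j 2^{m_j}` for `0 < δ ≤ 1`.
(ii) If soft gates `γ_k` (summing to one, `[0,1]`-valued) satisfy
    `Σ_k |γ_k(w) − 1{w ∈ C_k}| ≤ A·exp(−c₀δ/τ)` off `𝓑_δ` (within the cube), then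
    `∫ Σ_k |γ_k − r_k| dQ_ρ ≤ 2·Q_ρ(𝓑_δ) + A·exp(−c₀δ/τ)`.
-/

noncomputable def dyI (m k : ℕ) : Set ℝ :=
  if k + 1 = 2 ^ m then Set.Icc ((k : ℝ) / 2 ^ m) 1
  else Set.Ico ((k : ℝ) / 2 ^ m) (((k : ℝ) + 1) / 2 ^ m)

/-- Cell of `Π_m` inside `ℝ^d` with the Euclidean metric. -/
noncomputable def dyCellE {d : ℕ} (m : Fin d → ℕ) (k : ∀ j, Fin (2 ^ m j)) :
    Set (EuclideanSpace ℝ (Fin d)) :=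
  {w | ∀ j, w j ∈ dyI (m j) (k j)}

/-- The boundary layer `𝓑_δ`: points of the unit cube within Euclidean distance `δ`
of the union of the boundaries of the cells of `Π_m`. -/
noncomputable def bdryLayer {d : ℕ} (m : Fin d → ℕ) (δ : ℝ) :
    Set (EuclideanSpace ℝ (Fin d)) :=
  {w | (∀ j, w j ∈ Set.Icc (0 : ℝ) 1) ∧
    Metric.infDist w (⋃ k : (∀ j, Fin (2 ^ m j)), frontier (dyCellE m k)) ≤ δ}



lemma dyI_lower {m k : ℕ} {x : ℝ} (hx : x ∈ dyI m k) : (k : ℝ) / 2 ^ m ≤ x := by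
  unfold dyI at hx; split at hx
  · exact hx.1
  · exact hx.1

lemma dyI_subset_Icc {m k : ℕ} (hk : k < 2 ^ m) :
    dyI m k ⊆ Set.Icc ((k : ℝ) / 2 ^ m) (((k : ℝ) + 1) / 2 ^ m) := by
  unfold dyI; split
  · rename_i h
    have : ((k : ℝ) + 1) / 2 ^ m = 1 := by
      rw [div_eq_one_iff_eq (by positivity)]
      exact_mod_cast h
    rw [this]
  · exact Set.Ico_subset_Icc_self

lemma Ioo_subset_dyI (m k : ℕ) :
    Set.Ioo ((k : ℝ) / 2 ^ m) (((k : ℝ) + 1) / 2 ^ m) ⊆ dyI m k := by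
  unfold dyI; split
  · rename_i h
    intro x hx
    have h1 : ((k : ℝ) + 1) / 2 ^ m = 1 := by
      rw [div_eq_one_iff_eq (by positivity)]
      exact_mod_cast h
    exact ⟨hx.1.le, by rw [← h1]; exact hx.2.le⟩
  · exact Set.Ioo_subset_Ico_self

lemma dyI_not_lt {m k k' : ℕ} (hkk : k < k') (hk' : k' < 2 ^ m) {x : ℝ}
    (h1 : x ∈ dyI m k) (h2 : x ∈ dyI m k') : False := by
  have hle : ((k : ℝ) + 1) / 2 ^ m ≤ (k' : ℝ) / 2 ^ m := by
    apply div_le_div_of_nonneg_right ?_ (by positivity) |>.trans_eq rfl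
    · exact_mod_cast Nat.succ_le_of_lt hkk
  have hx2 := dyI_lower h2
  unfold dyI at h1; split at h1
  · rename_i h
    omega
  · exact absurd h1.2 (by linarith)

lemma dyI_unique {m k k' : ℕ} (hk : k < 2 ^ m) (hk' : k' < 2 ^ m) {x : ℝ}
    (h1 : x ∈ dyI m k) (h2 : x ∈ dyI m k') : k = k' := by
  rcases lt_trichotomy k k' with h | h | h
  · exact absurd (dyI_not_lt h hk' h1 h2) id
  · exact h
  · exact absurd (dyI_not_lt h hk h2 h1) id

section Euclid
variable {d : ℕ}

lemma coord_abs_le_dist (x y : EuclideanSpace ℝ (Fin d)) (j : Fin d) :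
    |x j - y j| ≤ dist x y := by
  rw [EuclideanSpace.dist_eq]
  rw [show |x j - y j| = Real.sqrt ((x j - y j) ^ 2) by rw [Real.sqrt_sq_eq_abs]]
  refine Real.sqrt_le_sqrt ?_
  have := Finset.single_le_sum (f := fun i => dist (x i) (y i) ^ 2)
    (fun i _ => sq_nonneg _) (Finset.mem_univ j)
  simpa [Real.dist_eq, sq_abs] using this

lemma measurable_coord (j : Fin d) :
    Measurable (fun w : EuclideanSpace ℝ (Fin d) => w j) :=
  (EuclideanSpace.proj (𝕜 := ℝ) j).continuous.measurable

lemma measurableSet_box (A : Fin d → Set ℝ) (hA : ∀ j, MeasurableSet (A j)) :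
    MeasurableSet {w : EuclideanSpace ℝ (Fin d) | ∀ j, w j ∈ A j} := by
  rw [Set.setOf_forall]
  exact MeasurableSet.iInter fun j => (hA j).preimage (measurable_coord j)

lemma isClosed_box (A : Fin d → Set ℝ) (hA : ∀ j, IsClosed (A j)) :
    IsClosed {w : EuclideanSpace ℝ (Fin d) | ∀ j, w j ∈ A j} := by
  rw [Set.setOf_forall]
  exact isClosed_iInter fun j => (hA j).preimage (EuclideanSpace.proj (𝕜 := ℝ) j).continuous

lemma isOpen_obox (A : Fin d → Set ℝ) (hA : ∀ j, IsOpen (A j)) :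
    IsOpen {w : EuclideanSpace ℝ (Fin d) | ∀ j, w j ∈ A j} := by
  rw [Set.setOf_forall]
  exact isOpen_iInter_of_finite fun j =>
    (hA j).preimage (EuclideanSpace.proj (𝕜 := ℝ) j).continuous

lemma volume_box (A : Fin d → Set ℝ) (hA : ∀ j, MeasurableSet (A j)) :
    volume {w : EuclideanSpace ℝ (Fin d) | ∀ j, w j ∈ A j} = ∏ j, volume (A j) := by
  rw [show {w : EuclideanSpace ℝ (Fin d) | ∀ j, w j ∈ A j}
      = (MeasurableEquiv.toLp 2 (Fin d → ℝ)).symm ⁻¹' (Set.pi Set.univ A) by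
    ext w; simp [Set.mem_pi]]
  rw [(EuclideanSpace.volume_preserving_symm_measurableEquiv_toLp (Fin d)).measure_preimage
    (MeasurableSet.univ_pi hA).nullMeasurableSet]
  exact volume_pi_pi A

lemma measurableSet_dyCellE (m : Fin d → ℕ) (k : ∀ j, Fin (2 ^ m j)) :
    MeasurableSet (dyCellE m k) := by
  apply measurableSet_box
  intro j
  unfold dyI; split
  · exact measurableSet_Icc
  · exact measurableSet_Ico

lemma frontier_dyCellE_subset (m : Fin d → ℕ) (k : ∀ j, Fin (2 ^ m j))
    {w : EuclideanSpace ℝ (Fin d)} (hw : w ∈ frontier (dyCellE m k)) :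
    ∃ j : Fin d, ∃ i : ℕ, i ≤ 2 ^ m j ∧ w j = (i : ℝ) / 2 ^ m j := by
  have hclosure : w ∈ {v : EuclideanSpace ℝ (Fin d) |
      ∀ j, v j ∈ Set.Icc (((k j : ℕ) : ℝ) / 2 ^ m j) ((((k j : ℕ) : ℝ) + 1) / 2 ^ m j)} := by
    refine closure_minimal ?_ (isClosed_box _ fun j => isClosed_Icc) hw.1
    intro v hv j
    exact dyI_subset_Icc (k j).isLt (hv j)
  have hinterior : w ∉ {v : EuclideanSpace ℝ (Fin d) |
      ∀ j, v j ∈ Set.Ioo (((k j : ℕ) : ℝ) / 2 ^ m j) ((((k j : ℕ) : ℝ) + 1) / 2 ^ m j)} := by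
    intro hv
    have hsub : {v : EuclideanSpace ℝ (Fin d) |
        ∀ j, v j ∈ Set.Ioo (((k j : ℕ) : ℝ) / 2 ^ m j) ((((k j : ℕ) : ℝ) + 1) / 2 ^ m j)}
        ⊆ dyCellE m k := fun u hu j => Ioo_subset_dyI _ _ (hu j)
    exact hw.2 (interior_maximal hsub (isOpen_obox _ fun j => isOpen_Ioo) hv)
  simp only [Set.mem_setOf_eq] at hinterior
  push_neg at hinterior
  obtain ⟨j, hj⟩ := hinterior
  have h1 := hclosure j
  rcases eq_or_lt_of_le h1.1 with heq | hlt
  · exact ⟨j, k j, (k j).isLt.le, heq.symm⟩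
  rcases eq_or_lt_of_le h1.2 with heq | hlt2
  · refine ⟨j, (k j : ℕ) + 1, (k j).isLt, ?_⟩
    rw [heq]; push_cast; ring_nf
  · exact absurd ⟨hlt, hlt2⟩ hj
end Euclid

section Geom
variable {d : ℕ}

lemma zero_mem_dyI (m : ℕ) : (0 : ℝ) ∈ dyI m 0 := by
  unfold dyI; split
  · exact ⟨by norm_num, by norm_num⟩
  · constructor
    · norm_num
    · positivity

lemma frontiers_nonempty (hd : 0 < d) (m : Fin d → ℕ) :
    (⋃ k : (∀ j, Fin (2 ^ m j)), frontier (dyCellE m k)).Nonempty := by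
  set k0 : ∀ j, Fin (2 ^ m j) := fun j => ⟨0, Nat.pow_pos (by norm_num)⟩ with hk0
  set j0 : Fin d := ⟨0, hd⟩
  set p : EuclideanSpace ℝ (Fin d) := WithLp.toLp 2 (fun _ => 0) with hp
  refine ⟨p, Set.mem_iUnion.2 ⟨k0, ?_, ?_⟩⟩
  · -- p ∈ closure (dyCellE m k0)
    apply subset_closure
    intro j
    simpa [hp, hk0] using zero_mem_dyI (m j)
  · -- p ∉ interior
    intro hint
    rw [mem_interior_iff_mem_nhds, Metric.mem_nhds_iff] at hint
    obtain ⟨ε, hε, hball⟩ := hint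
    set q : EuclideanSpace ℝ (Fin d) := WithLp.toLp 2 (fun i => if i = j0 then -(ε / 2) else 0) with hq
    have hdist : dist q p = ε / 2 := by
      have : dist q p = Real.sqrt (∑ i, (q i - p i) ^ 2) := by
        rw [EuclideanSpace.dist_eq]
        congr 1
        exact Finset.sum_congr rfl fun i _ => by rw [Real.dist_eq, sq_abs]
      rw [this, Finset.sum_eq_single j0]
      · have h1 : q j0 = -(ε / 2) := by simp [hq]
        have h2 : p j0 = (0 : ℝ) := rfl
        rw [h1, h2, show (-(ε / 2) - 0 : ℝ) ^ 2 = (ε / 2) ^ 2 by ring]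
        exact Real.sqrt_sq (by positivity)
      · intro i _ hi
        simp [hq, hp, hi]
      · intro h
        exact absurd (Finset.mem_univ j0) h
    have hqmem : q ∈ dyCellE m k0 := hball (by rw [Metric.mem_ball, hdist]; linarith)
    have := dyI_lower (hqmem j0)
    simp [hq, hk0] at this
    linarith
end Geom

lemma bdry_mem {d : ℕ} (hd : 0 < d) {m : Fin d → ℕ} {δ : ℝ}
    {w : EuclideanSpace ℝ (Fin d)} (hw : w ∈ bdryLayer m δ) :
    ∃ j : Fin d, ∃ i : ℕ, i ≤ 2 ^ m j ∧ |w j - (i : ℝ) / 2 ^ m j| ≤ δ := by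
  set U := ⋃ k : (∀ j, Fin (2 ^ m j)), frontier (dyCellE m k) with hU
  have hUne : U.Nonempty := frontiers_nonempty hd m
  have hUc : IsClosed U := isClosed_iUnion_of_finite fun k => isClosed_frontier
  obtain ⟨y, hyU, hyd⟩ := hUc.exists_infDist_eq_dist hUne w
  obtain ⟨k, hk⟩ := Set.mem_iUnion.1 hyU
  obtain ⟨j, i, hi, hji⟩ := frontier_dyCellE_subset m k hk
  refine ⟨j, i, hi, ?_⟩
  calc |w j - (i : ℝ) / 2 ^ m j| = |w j - y j| := by rw [hji]
    _ ≤ dist w y := coord_abs_le_dist w y j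
    _ ≤ δ := by rw [← hyd]; exact hw.2

lemma part_i {d : ℕ} (hd : 0 < d) (m : Fin d → ℕ) (Qρ : Measure (EuclideanSpace ℝ (Fin d)))
    (qbar : ℝ) (hq : 0 ≤ qbar)
    (hdens : ∀ s : Set (EuclideanSpace ℝ (Fin d)), MeasurableSet s →
      Qρ s ≤ ENNReal.ofReal qbar * volume s)
    (δ : ℝ) (hδ : δ ∈ Set.Ioc (0 : ℝ) 1) :
    (Qρ (bdryLayer m δ)).toReal ≤ 4 * qbar * δ * ∑ j, (2 : ℝ) ^ (m j) := by
  obtain ⟨hδ0, hδ1⟩ := hδ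
  set A : Fin d → ℕ → Fin d → Set ℝ := fun j i j' =>
    if j' = j then Set.Icc ((i : ℝ) / 2 ^ m j - δ) ((i : ℝ) / 2 ^ m j + δ)
    else Set.Icc 0 1 with hA
  set Box : Fin d → ℕ → Set (EuclideanSpace ℝ (Fin d)) := fun j i =>
    {w | ∀ j', w j' ∈ A j i j'} with hBox
  have hAmeas : ∀ j i j', MeasurableSet (A j i j') := by
    intro j i j'
    simp only [hA]
    split <;> exact measurableSet_Icc
  have hvol : ∀ (j : Fin d) (i : ℕ), volume (Box j i) = ENNReal.ofReal (2 * δ) := by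
    intro j i
    rw [hBox]
    rw [volume_box _ (hAmeas j i)]
    rw [Finset.prod_eq_single j (fun j' _ hj' => by
        simp [hA, hj', Real.volume_Icc])
      (fun h => absurd (Finset.mem_univ j) h)]
    simp only [hA, if_pos rfl, Real.volume_Icc]
    congr 1
    ring
  have hsub : bdryLayer m δ ⊆ ⋃ j : Fin d, ⋃ i : Fin (2 ^ m j + 1), Box j (i : ℕ) := by
    intro w hw
    obtain ⟨j, i, hi, habs⟩ := bdry_mem hd hw
    refine Set.mem_iUnion.2 ⟨j, Set.mem_iUnion.2 ⟨⟨i, by omega⟩, ?_⟩⟩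
    intro j'
    by_cases h : j' = j
    · subst h
      simp only [hA, if_pos rfl, Set.mem_Icc]
      have h2 := abs_le.1 habs
      constructor <;> [linarith [h2.2]; linarith [h2.1]]
    · simp only [hA, if_neg h]
      exact hw.1 j'
  have h1 : Qρ (bdryLayer m δ) ≤
      ∑ j : Fin d, ((2 ^ m j + 1 : ℕ) : ℝ≥0∞) *
        (ENNReal.ofReal qbar * ENNReal.ofReal (2 * δ)) := by
    calc Qρ (bdryLayer m δ) ≤ Qρ (⋃ j : Fin d, ⋃ i : Fin (2 ^ m j + 1), Box j (i : ℕ)) :=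
        measure_mono hsub
      _ ≤ ∑ j : Fin d, Qρ (⋃ i : Fin (2 ^ m j + 1), Box j (i : ℕ)) := by
        exact measure_iUnion_fintype_le _ _
      _ ≤ ∑ j : Fin d, ∑ i : Fin (2 ^ m j + 1), Qρ (Box j (i : ℕ)) := by
        refine Finset.sum_le_sum fun j _ => ?_
        exact measure_iUnion_fintype_le _ _
      _ ≤ ∑ j : Fin d, ∑ _i : Fin (2 ^ m j + 1),
          ENNReal.ofReal qbar * ENNReal.ofReal (2 * δ) := by
        refine Finset.sum_le_sum fun j _ => Finset.sum_le_sum fun i _ => ?_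
        calc Qρ (Box j (i : ℕ)) ≤ ENNReal.ofReal qbar * volume (Box j (i : ℕ)) :=
            hdens _ (measurableSet_box _ (hAmeas j (i : ℕ)))
          _ = ENNReal.ofReal qbar * ENNReal.ofReal (2 * δ) := by rw [hvol]
      _ = ∑ j : Fin d, ((2 ^ m j + 1 : ℕ) : ℝ≥0∞) *
          (ENNReal.ofReal qbar * ENNReal.ofReal (2 * δ)) := by
        refine Finset.sum_congr rfl fun j _ => ?_
        rw [Finset.sum_const, Finset.card_univ, Fintype.card_fin, nsmul_eq_mul]
  have hfin : ∀ j ∈ (Finset.univ : Finset (Fin d)),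
      ((2 ^ m j + 1 : ℕ) : ℝ≥0∞) * (ENNReal.ofReal qbar * ENNReal.ofReal (2 * δ)) ≠ ∞ := by
    intro j _
    exact ENNReal.mul_ne_top (ENNReal.natCast_ne_top _)
      (ENNReal.mul_ne_top ENNReal.ofReal_ne_top ENNReal.ofReal_ne_top)
  have h2 := ENNReal.toReal_mono (by
      rw [← lt_top_iff_ne_top]
      exact ENNReal.sum_lt_top.2 fun j hj => lt_top_iff_ne_top.2 (hfin j hj)) h1
  rw [ENNReal.toReal_sum hfin] at h2
  refine h2.trans ?_
  have hcast : ∀ j : Fin d,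
      (((2 ^ m j + 1 : ℕ) : ℝ≥0∞) *
        (ENNReal.ofReal qbar * ENNReal.ofReal (2 * δ))).toReal
      = ((2 : ℝ) ^ m j + 1) * (qbar * (2 * δ)) := by
    intro j
    rw [ENNReal.toReal_mul, ENNReal.toReal_mul, ENNReal.toReal_natCast,
      ENNReal.toReal_ofReal hq, ENNReal.toReal_ofReal (by linarith)]
    push_cast
    ring
  rw [Finset.sum_congr rfl fun j _ => hcast j, Finset.mul_sum]
  refine Finset.sum_le_sum fun j _ => ?_
  have hx : (1 : ℝ) ≤ 2 ^ m j := by exact_mod_cast Nat.one_le_two_pow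
  nlinarith [mul_nonneg (mul_nonneg hq hδ0.le) (sub_nonneg.2 hx)]

lemma cell_unique {d : ℕ} {m : Fin d → ℕ} {k k' : ∀ j, Fin (2 ^ m j)}
    {w : EuclideanSpace ℝ (Fin d)} (h1 : w ∈ dyCellE m k) (h2 : w ∈ dyCellE m k') :
    k = k' := by
  funext j
  exact Fin.ext (dyI_unique (k j).isLt (k' j).isLt (h1 j) (h2 j))

lemma sum_ind_le_one {d : ℕ} (m : Fin d → ℕ) (w : EuclideanSpace ℝ (Fin d)) :
    ∑ k : (∀ j, Fin (2 ^ m j)),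
      Set.indicator (dyCellE m k) (fun _ => (1 : ℝ)) w ≤ 1 := by
  by_cases hex : ∃ k0, w ∈ dyCellE m k0
  · obtain ⟨k0, hk0⟩ := hex
    rw [Finset.sum_eq_single k0]
    · rw [Set.indicator_of_mem hk0]
    · intro k _ hk
      exact Set.indicator_of_notMem (fun hmem => hk (cell_unique hmem hk0)) _
    · intro h
      exact absurd (Finset.mem_univ k0) h
  · push_neg at hex
    rw [Finset.sum_congr rfl fun k _ => Set.indicator_of_notMem (hex k) _]
    simp

lemma part_ii {d : ℕ} (m : Fin d → ℕ) (Qρ : Measure (EuclideanSpace ℝ (Fin d)))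
    [IsProbabilityMeasure Qρ]
    (hcube : Qρ {w | ∀ j, w j ∈ Set.Icc (0 : ℝ) 1} = 1)
    (γ : (∀ j, Fin (2 ^ m j)) → EuclideanSpace ℝ (Fin d) → ℝ)
    (hγm : ∀ k, Measurable (γ k)) (hγ01 : ∀ k w, γ k w ∈ Set.Icc (0 : ℝ) 1)
    (hγsum : ∀ w, ∑ k, γ k w = 1)
    (A c₀ τ δ : ℝ) (hA : 0 < A) (hc₀ : 0 < c₀) (hτ : 0 < τ) (hδ : δ ∈ Set.Ioc (0 : ℝ) 1)
    (hoff : ∀ w : EuclideanSpace ℝ (Fin d), (∀ j, w j ∈ Set.Icc (0 : ℝ) 1) →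
      w ∉ bdryLayer m δ →
      ∑ k, |γ k w - Set.indicator (dyCellE m k) (fun _ => (1 : ℝ)) w|
        ≤ A * Real.exp (-(c₀ * δ) / τ)) :
    ∫ w, ∑ k, |γ k w - Set.indicator (dyCellE m k) (fun _ => (1 : ℝ)) w| ∂Qρ
      ≤ 2 * (Qρ (bdryLayer m δ)).toReal + A * Real.exp (-(c₀ * δ) / τ) := by
  set f : EuclideanSpace ℝ (Fin d) → ℝ :=
    fun w => ∑ k, |γ k w - Set.indicator (dyCellE m k) (fun _ => (1 : ℝ)) w| with hf
  have hnn : ∀ w, 0 ≤ f w := fun w => Finset.sum_nonneg fun k _ => abs_nonneg _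
  have hle2 : ∀ w, f w ≤ 2 := by
    intro w
    have h1 : f w ≤ (∑ k, γ k w) +
        ∑ k, Set.indicator (dyCellE m k) (fun _ => (1 : ℝ)) w := by
      rw [← Finset.sum_add_distrib]
      refine Finset.sum_le_sum fun k _ => ?_
      have h2 := (hγ01 k w).1
      have h3 : (0 : ℝ) ≤ Set.indicator (dyCellE m k) (fun _ => (1 : ℝ)) w :=
        Set.indicator_nonneg (fun _ _ => zero_le_one) w
      calc |γ k w - Set.indicator (dyCellE m k) (fun _ => (1 : ℝ)) w|
          ≤ |γ k w| + |Set.indicator (dyCellE m k) (fun _ => (1 : ℝ)) w| := abs_sub _ _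
        _ = γ k w + Set.indicator (dyCellE m k) (fun _ => (1 : ℝ)) w := by
            rw [abs_of_nonneg h2, abs_of_nonneg h3]
    rw [hγsum w] at h1
    linarith [sum_ind_le_one m w]
  have hfm : Measurable f := by
    refine Finset.measurable_sum _ fun k _ => ?_
    exact ((hγm k).sub
      (measurable_const.indicator (measurableSet_dyCellE m k))).abs
  have hf_int : Integrable f Qρ := by
    refine Integrable.mono' (integrable_const 2) hfm.aestronglyMeasurable
      (Filter.Eventually.of_forall fun w => ?_)
    rw [Real.norm_eq_abs, abs_of_nonneg (hnn w)]
    exact hle2 w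
  have hBmeas : MeasurableSet (bdryLayer m δ) := by
    have h1 : IsClosed {w : EuclideanSpace ℝ (Fin d) | ∀ j, w j ∈ Set.Icc (0 : ℝ) 1} :=
      isClosed_box _ fun _ => isClosed_Icc
    have h2 : IsClosed {w : EuclideanSpace ℝ (Fin d) |
        Metric.infDist w (⋃ k : (∀ j, Fin (2 ^ m j)), frontier (dyCellE m k)) ≤ δ} :=
      isClosed_le (Metric.continuous_infDist_pt _) continuous_const
    exact (h1.inter h2).measurableSet
  have hcubemeas : MeasurableSet {w : EuclideanSpace ℝ (Fin d) | ∀ j, w j ∈ Set.Icc (0 : ℝ) 1} :=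
    measurableSet_box _ fun _ => measurableSet_Icc
  have hac : ∀ᵐ w ∂Qρ, (∀ j, w j ∈ Set.Icc (0 : ℝ) 1) := by
    rw [MeasureTheory.ae_iff]
    have h := measure_compl hcubemeas (measure_ne_top Qρ _)
    rw [hcube, measure_univ] at h
    simpa [Set.compl_setOf] using h
  set g : EuclideanSpace ℝ (Fin d) → ℝ :=
    fun w => Set.indicator (bdryLayer m δ) (fun _ => (2 : ℝ)) w
      + A * Real.exp (-(c₀ * δ) / τ) with hg
  have hg_int : Integrable g Qρ :=
    ((integrable_const (2 : ℝ)).indicator hBmeas).add (integrable_const _)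
  have hfg : ∀ᵐ w ∂Qρ, f w ≤ g w := by
    filter_upwards [hac] with w hw
    by_cases hB : w ∈ bdryLayer m δ
    · have hgw : g w = 2 + A * Real.exp (-(c₀ * δ) / τ) := by
        rw [hg]; simp [Set.indicator_of_mem hB]
      rw [hgw]
      have hexp : 0 < A * Real.exp (-(c₀ * δ) / τ) := by positivity
      linarith [hle2 w]
    · have hgw : g w = A * Real.exp (-(c₀ * δ) / τ) := by
        rw [hg]; simp [Set.indicator_of_notMem hB]
      rw [hgw]
      exact hoff w hw hB
  calc ∫ w, f w ∂Qρ ≤ ∫ w, g w ∂Qρ := integral_mono_ae hf_int hg_int hfg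
    _ = 2 * (Qρ (bdryLayer m δ)).toReal + A * Real.exp (-(c₀ * δ) / τ) := by
      rw [hg, integral_add ((integrable_const (2 : ℝ)).indicator hBmeas) (integrable_const _)]
      rw [integral_indicator_const _ hBmeas, integral_const]
      simp [measure_univ, smul_eq_mul, mul_comm, measureReal_def]


theorem stmt12 (d : ℕ) (hd : 0 < d) :
    -- (i)
    (∃ C : ℝ, 0 < C ∧ ∀ (m : Fin d → ℕ) (Qρ : Measure (EuclideanSpace ℝ (Fin d))),
      IsProbabilityMeasure Qρ →
      ∀ qbar : ℝ, 0 ≤ qbar →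
      (∀ s : Set (EuclideanSpace ℝ (Fin d)), MeasurableSet s →
        Qρ s ≤ ENNReal.ofReal qbar * volume s) →
      ∀ δ : ℝ, δ ∈ Set.Ioc (0 : ℝ) 1 →
      (Qρ (bdryLayer m δ)).toReal ≤ C * qbar * δ * ∑ j, (2 : ℝ) ^ (m j)) ∧
    -- (ii)
    (∀ (m : Fin d → ℕ) (Qρ : Measure (EuclideanSpace ℝ (Fin d))),
      IsProbabilityMeasure Qρ →
      Qρ {w | ∀ j, w j ∈ Set.Icc (0 : ℝ) 1} = 1 →
      ∀ γ : (∀ j, Fin (2 ^ m j)) → EuclideanSpace ℝ (Fin d) → ℝ,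
      (∀ k, Measurable (γ k)) →
      (∀ k w, γ k w ∈ Set.Icc (0 : ℝ) 1) →
      (∀ w, ∑ k, γ k w = 1) →
      ∀ A c₀ τ δ : ℝ, 0 < A → 0 < c₀ → 0 < τ → δ ∈ Set.Ioc (0 : ℝ) 1 →
      (∀ w : EuclideanSpace ℝ (Fin d), (∀ j, w j ∈ Set.Icc (0 : ℝ) 1) →
        w ∉ bdryLayer m δ →
        ∑ k, |γ k w - Set.indicator (dyCellE m k) (fun _ => (1 : ℝ)) w|
          ≤ A * Real.exp (-(c₀ * δ) / τ)) →
      ∫ w, ∑ k, |γ k w - Set.indicator (dyCellE m k) (fun _ => (1 : ℝ)) w| ∂Qρ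
        ≤ 2 * (Qρ (bdryLayer m δ)).toReal + A * Real.exp (-(c₀ * δ) / τ)) := by
  constructor
  · refine ⟨4, by norm_num, ?_⟩
    intro m Qρ hQ qbar hq hdens δ hδ
    exact part_i hd m Qρ qbar hq hdens δ hδ
  · intro m Qρ hQ hcube γ hγm hγ01 hγsum A c₀ τ δ hA hc₀ hτ hδ hoff
    exact part_ii m Qρ hcube γ hγm hγ01 hγsum A c₀ τ δ hA hc₀ hτ hδ hoff
end
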